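/- Let θ be a Borel probability measure on ℝⁿ that is absolutely continuous with respect to Lebesgue measure and satisfies E_θ[max_i |ε_i|] < ∞. Define w(μ) = E_θ[max_{i ∈ {1,…,n}} (μ_i + ε_i)] and q_i(μ) = θ({ε : μ_i + ε_i > μ_k + ε_k for all k ≠ i}). Then w is a differentiable choice welfare function (monotone, translation invariant, convex, differentiable) and ∇w(μ) = q(μ) for all μ ∈ ℝⁿ. -/

import Mathlib

open scoped BigOperators
open MeasureTheory Set Filter

noncomputable section

namespace Stmt10Aux

variable {n : ℕ} [Nonempty (Fin n)]

lemma bdd (g : Fin n → ℝ) : BddAbove (Set.range g) := Finite.bddAbove_range g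

lemma le_msup (g : Fin n → ℝ) (i : Fin n) : g i ≤ ⨆ j, g j := le_ciSup (bdd g) i

lemma sup_sub_le (μ ν ε : Fin n → ℝ) :
    (⨆ i, μ i + ε i) ≤ (⨆ i, ν i + ε i) + ‖μ - ν‖ := by
  refine ciSup_le fun i => ?_
  have h1 : μ i - ν i ≤ ‖μ - ν‖ := by
    calc μ i - ν i ≤ |μ i - ν i| := le_abs_self _
    _ = |(μ - ν) i| := by simp [Pi.sub_apply]
    _ ≤ ‖μ - ν‖ := by simpa [Real.norm_eq_abs] using norm_le_pi_norm (μ - ν) i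
  have h2 := le_msup (fun j => ν j + ε j) i
  linarith

lemma lip (ε : Fin n → ℝ) : LipschitzWith 1 (fun μ : Fin n → ℝ => ⨆ i, μ i + ε i) := by
  refine LipschitzWith.of_dist_le_mul fun μ ν => ?_
  rw [Real.dist_eq, NNReal.coe_one, one_mul, dist_eq_norm]
  have h1 := sup_sub_le μ ν ε
  have h2 := sup_sub_le ν μ ε
  rw [show ν - μ = -(μ - ν) by ring, norm_neg] at h2
  rw [abs_sub_le_iff]
  constructor <;> linarith

lemma cont_eps (μ : Fin n → ℝ) : Continuous (fun ε : Fin n → ℝ => ⨆ i, μ i + ε i) := by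
  have : (fun ε : Fin n → ℝ => ⨆ i, μ i + ε i) = fun ε : Fin n → ℝ => ⨆ i, ε i + μ i := by
    funext ε; simp [add_comm]
  rw [this]; exact (lip μ).continuous

lemma abs_sup_le (μ ε : Fin n → ℝ) : |⨆ i, μ i + ε i| ≤ ‖μ‖ + ⨆ i, |ε i| := by
  have hb : ∀ i, |ε i| ≤ ⨆ j, |ε j| := fun i => le_msup (fun j => |ε j|) i
  rw [abs_le]
  constructor
  · obtain ⟨i⟩ := (inferInstance : Nonempty (Fin n))
    have := le_msup (fun j => μ j + ε j) i
    have h1 : -‖μ‖ ≤ μ i := neg_le_of_abs_le (by simpa [Real.norm_eq_abs] using norm_le_pi_norm μ i)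
    have h2 : -(⨆ j, |ε j|) ≤ ε i := neg_le_of_abs_le (hb i)
    linarith
  · refine ciSup_le fun i => ?_
    have h1 : μ i ≤ ‖μ‖ := le_of_abs_le (by simpa [Real.norm_eq_abs] using norm_le_pi_norm μ i)
    have h2 : ε i ≤ ⨆ j, |ε j| := (le_abs_self _).trans (hb i)
    linarith

lemma integrable_f (θ : Measure (Fin n → ℝ)) [IsProbabilityMeasure θ]
    (hint : Integrable (fun ε : Fin n → ℝ => ⨆ i, |ε i|) θ) (μ : Fin n → ℝ) :
    Integrable (fun ε => ⨆ i, μ i + ε i) θ := by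
  refine Integrable.mono ((integrable_const ‖μ‖).add hint) ((cont_eps μ).aestronglyMeasurable) ?_
  refine Filter.Eventually.of_forall fun ε => ?_
  rw [Real.norm_eq_abs]
  refine (abs_sup_le μ ε).trans ?_
  rw [Real.norm_eq_abs]
  exact le_abs_self _

lemma hyperplane_null (f : (Fin n → ℝ) →ₗ[ℝ] ℝ) (hf : f ≠ 0) (c : ℝ) :
    volume {x : Fin n → ℝ | f x = c} = 0 := by
  obtain ⟨y, hy⟩ : ∃ y, f y ≠ 0 := by
    by_contra h; push_neg at h; exact hf (LinearMap.ext fun x => by simp [h x])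
  set x₀ : Fin n → ℝ := (c / f y) • y with hx₀
  have hfx₀ : f x₀ = c := by
    rw [hx₀, LinearMap.map_smul, smul_eq_mul, div_mul_cancel₀ _ hy]
  have hset : {x : Fin n → ℝ | f x = c} = (fun x => x + -x₀) ⁻¹' (LinearMap.ker f : Set (Fin n → ℝ)) := by
    ext x
    simp only [Set.mem_setOf_eq, Set.mem_preimage, SetLike.mem_coe, LinearMap.mem_ker, map_add,
      map_neg, hfx₀]
    constructor <;> intro h <;> linarith
  rw [hset, measure_preimage_add_right]
  exact Measure.addHaar_submodule volume _ (by rwa [Ne, LinearMap.ker_eq_top])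


def Sset (μ₀ : Fin n → ℝ) (i : Fin n) : Set (Fin n → ℝ) :=
  {ε | ∀ k, k ≠ i → μ₀ k + ε k < μ₀ i + ε i}

lemma meas_S (μ₀ : Fin n → ℝ) (i : Fin n) : MeasurableSet (Sset μ₀ i) := by
  have : Sset μ₀ i = ⋂ k, ⋂ _ : k ≠ i, {ε : Fin n → ℝ | μ₀ k + ε k < μ₀ i + ε i} := by
    ext ε; simp [Sset]
  rw [this]
  refine MeasurableSet.iInter fun k => MeasurableSet.iInter fun _ => ?_
  exact measurableSet_lt ((measurable_pi_apply k).const_add _) ((measurable_pi_apply i).const_add _)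

def gradMap (μ₀ ε : Fin n → ℝ) : (Fin n → ℝ) →L[ℝ] ℝ :=
  ∑ i, Set.indicator (Sset μ₀ i) (fun _ => (1:ℝ)) ε • ContinuousLinearMap.proj i

lemma gradMap_meas (μ₀ : Fin n → ℝ) : StronglyMeasurable (gradMap μ₀) := by
  refine Finset.stronglyMeasurable_fun_sum _ fun i _ => ?_
  exact (((measurable_const (a := (1:ℝ)) (β := Fin n → ℝ)).indicator (meas_S μ₀ i)).stronglyMeasurable).smul
    (stronglyMeasurable_const (b := (ContinuousLinearMap.proj i : (Fin n → ℝ) →L[ℝ] ℝ)))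

lemma tie_null (θ : Measure (Fin n → ℝ)) (hac : θ ≪ volume) (μ₀ : Fin n → ℝ) :
    θ {ε | ∃ i k, i ≠ k ∧ μ₀ i + ε i = μ₀ k + ε k} = 0 := by
  refine hac ?_
  have hsub : {ε : Fin n → ℝ | ∃ i k, i ≠ k ∧ μ₀ i + ε i = μ₀ k + ε k} ⊆
      ⋃ i, ⋃ k, {ε : Fin n → ℝ | i ≠ k ∧ μ₀ i + ε i = μ₀ k + ε k} := by
    rintro ε ⟨i, k, h⟩
    exact Set.mem_iUnion.2 ⟨i, Set.mem_iUnion.2 ⟨k, h⟩⟩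
  refine measure_mono_null hsub (measure_iUnion_null fun i => measure_iUnion_null fun k => ?_)
  by_cases hik : i = k
  · simp [hik]
  · set f : (Fin n → ℝ) →ₗ[ℝ] ℝ := (LinearMap.proj i : (Fin n → ℝ) →ₗ[ℝ] ℝ) - (LinearMap.proj k : (Fin n → ℝ) →ₗ[ℝ] ℝ) with hf
    have hset : {ε : Fin n → ℝ | i ≠ k ∧ μ₀ i + ε i = μ₀ k + ε k} ⊆
        {ε : Fin n → ℝ | f ε = μ₀ k - μ₀ i} := by
      rintro ε ⟨-, h⟩
      simp only [hf, Set.mem_setOf_eq, LinearMap.sub_apply, LinearMap.proj_apply]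
      linarith
    refine measure_mono_null hset (hyperplane_null f ?_ _)
    intro h0
    have h1 : f (Pi.single i 1) = 0 := by rw [h0]; rfl
    simp [hf, Pi.single_eq_same, Pi.single_eq_of_ne (Ne.symm hik)] at h1

lemma ae_deriv (θ : Measure (Fin n → ℝ)) (hac : θ ≪ volume) (μ₀ : Fin n → ℝ) :
    ∀ᵐ ε ∂θ, HasFDerivAt (fun μ : Fin n → ℝ => ⨆ i, μ i + ε i) (gradMap μ₀ ε) μ₀ := by
  have h0 : ∀ᵐ ε ∂θ, ε ∉ {ε : Fin n → ℝ | ∃ i k, i ≠ k ∧ μ₀ i + ε i = μ₀ k + ε k} :=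
    measure_eq_zero_iff_ae_notMem.mp (tie_null θ hac μ₀)
  filter_upwards [h0] with ε hε
  simp only [Set.mem_setOf_eq, not_exists, not_and] at hε
  obtain ⟨i₀, hmax⟩ := Finite.exists_max (fun i => μ₀ i + ε i)
  have hstrict : ∀ k, k ≠ i₀ → μ₀ k + ε k < μ₀ i₀ + ε i₀ := fun k hk =>
    lt_of_le_of_ne (hmax k) (by intro h; exact hε k i₀ hk h)
  -- gradMap μ₀ ε = proj i₀
  have hgm : gradMap μ₀ ε = ContinuousLinearMap.proj i₀ := by
    rw [gradMap, Finset.sum_eq_single i₀]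
    · rw [Set.indicator_of_mem (show ε ∈ Sset μ₀ i₀ from hstrict), one_smul]
    · intro j _ hj
      have : ε ∉ Sset μ₀ j := by
        intro hmem
        exact absurd (hmem i₀ (Ne.symm hj)) (not_lt.2 (hmax j))
      rw [Set.indicator_of_notMem this, zero_smul]
    · intro h; exact absurd (Finset.mem_univ i₀) h
  rw [hgm]
  -- local equality with affine function
  have hev : ∀ᶠ μ in nhds μ₀, ∀ k, k ≠ i₀ → μ k + ε k < μ i₀ + ε i₀ := by
    rw [eventually_all]
    intro k
    by_cases hk : k = i₀
    · simp [hk]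
    · have hc1 : ContinuousAt (fun μ : Fin n → ℝ => μ k + ε k) μ₀ :=
        ((continuous_apply k).add continuous_const).continuousAt
      have hc2 : ContinuousAt (fun μ : Fin n → ℝ => μ i₀ + ε i₀) μ₀ :=
        ((continuous_apply i₀).add continuous_const).continuousAt
      filter_upwards [hc1.eventually_lt hc2 (hstrict k hk)] with μ h _
      exact h
  have heq : (fun μ : Fin n → ℝ => ⨆ i, μ i + ε i) =ᶠ[nhds μ₀]
      (fun μ : Fin n → ℝ => μ i₀ + ε i₀) := by
    filter_upwards [hev] with μ hμ
    refine le_antisymm (ciSup_le fun i => ?_) (le_msup (fun j => μ j + ε j) i₀)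
    by_cases hi : i = i₀
    · rw [hi]
    · exact le_of_lt (hμ i hi)
  have hbase : HasFDerivAt (fun μ : Fin n → ℝ => μ i₀ + ε i₀)
      (ContinuousLinearMap.proj i₀ : (Fin n → ℝ) →L[ℝ] ℝ) μ₀ :=
    (ContinuousLinearMap.proj i₀ : (Fin n → ℝ) →L[ℝ] ℝ).hasFDerivAt.add_const (ε i₀)
  exact hbase.congr_of_eventuallyEq heq

lemma main_deriv (θ : Measure (Fin n → ℝ)) [IsProbabilityMeasure θ] (hac : θ ≪ volume)
    (hint : Integrable (fun ε : Fin n → ℝ => ⨆ i, |ε i|) θ) (μ₀ : Fin n → ℝ) :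
    Integrable (gradMap μ₀) θ ∧
      HasFDerivAt (fun μ : Fin n → ℝ => ∫ ε, (⨆ i, μ i + ε i) ∂θ)
        (∫ ε, gradMap μ₀ ε ∂θ) μ₀ := by
  refine hasFDerivAt_integral_of_dominated_loc_of_lip (s := Metric.ball μ₀ 1) (bound := fun _ => (1:ℝ))
    (Metric.ball_mem_nhds μ₀ one_pos) (Eventually.of_forall fun μ => (cont_eps μ).aestronglyMeasurable)
    (integrable_f θ hint μ₀) (gradMap_meas μ₀).aestronglyMeasurable
    (Eventually.of_forall fun ε => ?_) (integrable_const 1) (ae_deriv θ hac μ₀)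
  have : Real.nnabs (1:ℝ) = 1 := by simp
  rw [this]
  exact (lipschitzOnWith_univ.mpr (lip ε)).mono (Set.subset_univ _)

end Stmt10Aux
/-- The simplex Δ_{n-1} in ℝⁿ. -/
def choiceSimplex (n : ℕ) : Set (Fin n → ℝ) :=
  {x | (∀ i, 0 ≤ x i) ∧ ∑ i, x i = 1}

/-- A choice welfare function: monotone, translation invariant, convex. -/
def IsCWF {n : ℕ} (w : (Fin n → ℝ) → ℝ) : Prop :=
  (∀ μ₁ μ₂ : Fin n → ℝ, μ₂ ≤ μ₁ → w μ₂ ≤ w μ₁) ∧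
  (∀ (μ : Fin n → ℝ) (t : ℝ), w (μ + fun _ => t) = w μ + t) ∧
  ConvexOn ℝ Set.univ w

/-- The gradient of w at μ, whose i-th component is the partial derivative ∂w/∂μᵢ. -/
def grad {n : ℕ} (w : (Fin n → ℝ) → ℝ) (μ : Fin n → ℝ) : Fin n → ℝ :=
  fun i => fderiv ℝ w μ (Pi.single i 1)

theorem stmt_10 (n : ℕ) (hn : 0 < n) (θ : Measure (Fin n → ℝ))
    [IsProbabilityMeasure θ] (hac : θ ≪ volume)
    (hint : Integrable (fun ε : Fin n → ℝ => ⨆ i, |ε i|) θ)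
    (w : (Fin n → ℝ) → ℝ) (q : (Fin n → ℝ) → Fin n → ℝ)
    (hw : ∀ μ : Fin n → ℝ, w μ = ∫ ε, (⨆ i, μ i + ε i) ∂θ)
    (hq : ∀ (μ : Fin n → ℝ) (i : Fin n),
      q μ i = (θ {ε | ∀ k, k ≠ i → μ k + ε k < μ i + ε i}).toReal) :
    IsCWF w ∧ Differentiable ℝ w ∧ ∀ μ : Fin n → ℝ, grad w μ = q μ := by
  haveI : Nonempty (Fin n) := Fin.pos_iff_nonempty.mp hn
  have hwfun : w = fun μ => ∫ ε, (⨆ i, μ i + ε i) ∂θ := funext hw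
  have hD : ∀ μ₀ : Fin n → ℝ, Integrable (Stmt10Aux.gradMap μ₀) θ ∧
      HasFDerivAt w (∫ ε, Stmt10Aux.gradMap μ₀ ε ∂θ) μ₀ := by
    intro μ₀
    obtain ⟨h1, h2⟩ := Stmt10Aux.main_deriv θ hac hint μ₀
    exact ⟨h1, by rw [hwfun]; exact h2⟩
  refine ⟨⟨?_, ?_, ?_⟩, fun μ₀ => ((hD μ₀).2).differentiableAt, ?_⟩
  · -- monotonicity
    intro μ₁ μ₂ h
    rw [hw, hw]
    refine integral_mono (Stmt10Aux.integrable_f θ hint μ₂)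
      (Stmt10Aux.integrable_f θ hint μ₁) fun ε => ?_
    refine ciSup_le fun i => le_trans ?_ (Stmt10Aux.le_msup (fun j => μ₁ j + ε j) i)
    have := h i
    simp only
    linarith
  · -- translation invariance
    intro μ t
    rw [hw, hw]
    have key : ∀ ε : Fin n → ℝ,
        (⨆ i, (μ + fun _ => t : Fin n → ℝ) i + ε i) = (⨆ i, μ i + ε i) + t := by
      intro ε
      rw [ciSup_add (Stmt10Aux.bdd (fun i => μ i + ε i)) t]
      congr 1
      funext i
      simp only [Pi.add_apply]
      ring
    simp_rw [key]
    rw [integral_add (Stmt10Aux.integrable_f θ hint μ) (integrable_const t), integral_const,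
      probReal_univ, one_smul]
  · -- convexity
    refine ⟨convex_univ, ?_⟩
    intro μ _ ν _ a b ha hb hab
    rw [hw, hw, hw, smul_eq_mul, smul_eq_mul]
    rw [← integral_const_mul a, ← integral_const_mul b,
      ← integral_add ((Stmt10Aux.integrable_f θ hint μ).const_mul a)
        ((Stmt10Aux.integrable_f θ hint ν).const_mul b)]
    refine integral_mono (Stmt10Aux.integrable_f θ hint _)
      (((Stmt10Aux.integrable_f θ hint μ).const_mul a).add
        ((Stmt10Aux.integrable_f θ hint ν).const_mul b)) fun ε => ?_
    refine ciSup_le fun i => ?_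
    have h1 : μ i + ε i ≤ ⨆ j, μ j + ε j := Stmt10Aux.le_msup (fun j => μ j + ε j) i
    have h2 : ν i + ε i ≤ ⨆ j, ν j + ε j := Stmt10Aux.le_msup (fun j => ν j + ε j) i
    have e : (a • μ + b • ν) i + ε i = a * (μ i + ε i) + b * (ν i + ε i) := by
      simp only [Pi.add_apply, Pi.smul_apply, smul_eq_mul]
      have : a * ε i + b * ε i = ε i := by rw [← add_mul, hab, one_mul]
      linarith
    rw [e]
    simp only
    exact add_le_add (mul_le_mul_of_nonneg_left h1 ha) (mul_le_mul_of_nonneg_left h2 hb)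
  · -- gradient
    intro μ
    funext j
    show fderiv ℝ w μ (Pi.single j 1) = q μ j
    rw [(hD μ).2.fderiv, ContinuousLinearMap.integral_apply (hD μ).1, hq]
    have key : ∀ ε : Fin n → ℝ, Stmt10Aux.gradMap μ ε (Pi.single j 1) =
        Set.indicator (Stmt10Aux.Sset μ j) 1 ε := by
      intro ε
      rw [Stmt10Aux.gradMap, ContinuousLinearMap.sum_apply, Finset.sum_eq_single j]
      · rw [ContinuousLinearMap.smul_apply, ContinuousLinearMap.proj_apply, Pi.single_eq_same,
          smul_eq_mul, mul_one]
        rfl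
      · intro i _ hij
        simp [ContinuousLinearMap.proj_apply, Pi.single_eq_of_ne hij]
      · intro h; exact absurd (Finset.mem_univ j) h
    simp_rw [key]
    rw [MeasureTheory.integral_indicator_one (Stmt10Aux.meas_S μ j)]
    rfl
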